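/- (Cayley's formula) For every integer n ≥ 1, the number of spanning trees of the complete graph K_n, equivalently the number of labeled trees on the vertex set {1, ..., n}, equals n^{n−2}. -/

import Mathlib

namespace CayleyAux
open scoped Classical

variable {n : ℕ}

/-- Parent function on vertex set `s` rooted at `r`. -/
structure IsPF (s : Finset (Fin n)) (r : Fin n) (f : Fin n → Fin n) : Prop where
  fix_out : ∀ v, v ∉ s → f v = v
  root_fix : f r = r
  maps : ∀ v ∈ s, f v ∈ s
  reach : ∀ v ∈ s, ∃ k, f^[k] v = r

lemma iterate_agree {f f' : Fin n → Fin n} {t : Finset (Fin n)}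
    (hmap : ∀ v ∈ t, f v ∈ t) (hag : ∀ v ∈ t, f' v = f v) :
    ∀ k, ∀ v ∈ t, f'^[k] v = f^[k] v := by
  intro k
  induction k with
  | zero => simp
  | succ k ih =>
    intro v hv
    rw [Function.iterate_succ_apply, Function.iterate_succ_apply, hag v hv]
    exact ih (f v) (hmap v hv)

lemma iterate_mem {f : Fin n → Fin n} {t : Finset (Fin n)}
    (hmap : ∀ v ∈ t, f v ∈ t) : ∀ k, ∀ v ∈ t, f^[k] v ∈ t := by
  intro k
  induction k with
  | zero => simpa
  | succ k ih => intro v hv; rw [Function.iterate_succ_apply]; exact ih _ (hmap v hv)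

noncomputable def depth (r : Fin n) (f : Fin n → Fin n) (v : Fin n) : ℕ :=
  if h : ∃ k, f^[k] v = r then Nat.find h else 0

lemma reach_step {r : Fin n} {f : Fin n → Fin n} {v : Fin n}
    (h : ∃ k, f^[k] v = r) (hv : v ≠ r) : ∃ k, f^[k] (f v) = r := by
  obtain ⟨k, hk⟩ := h
  cases k with
  | zero => exact absurd hk hv
  | succ k => exact ⟨k, by rwa [← Function.iterate_succ_apply]⟩

lemma depth_succ {r : Fin n} {f : Fin n → Fin n} {v : Fin n}
    (h : ∃ k, f^[k] v = r) (hv : v ≠ r) : depth r f v = depth r f (f v) + 1 := by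
  have h' := reach_step h hv
  rw [depth, depth, dif_pos h, dif_pos h']
  have h1 : Nat.find h ≠ 0 := by
    intro h0
    exact hv (by simpa [h0] using Nat.find_spec h)
  have h2 : Nat.find h' ≤ Nat.find h - 1 := by
    apply Nat.find_le
    rw [← Function.iterate_succ_apply, Nat.succ_eq_add_one, Nat.sub_add_cancel (Nat.one_le_iff_ne_zero.2 h1)]
    exact Nat.find_spec h
  have h3 : Nat.find h ≤ Nat.find h' + 1 := by
    apply Nat.find_le
    rw [Function.iterate_succ_apply]
    exact Nat.find_spec h'
  omega

/-- there is a leaf: a vertex of `s` not in the image. -/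
lemma exists_leaf {s : Finset (Fin n)} {r : Fin n} {f : Fin n → Fin n}
    (hPF : IsPF s r f) (hr : r ∈ s) (h2 : 2 ≤ s.card) : (s \ s.image f).Nonempty := by
  have hne : (s.erase r).Nonempty := by
    rw [← Finset.card_pos, Finset.card_erase_of_mem hr]; omega
  obtain ⟨ℓ, hℓ, hmax⟩ := Finset.exists_max_image (s.erase r) (depth r f) hne
  refine ⟨ℓ, Finset.mem_sdiff.2 ⟨Finset.mem_of_mem_erase hℓ, ?_⟩⟩
  intro hmem
  obtain ⟨w, hw, hfw⟩ := Finset.mem_image.1 hmem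
  have hℓr : ℓ ≠ r := Finset.ne_of_mem_erase hℓ
  have hwr : w ≠ r := by rintro rfl; exact hℓr (hfw.symm.trans hPF.root_fix)
  have hwℓ : w ≠ ℓ := by
    rintro rfl
    obtain ⟨k, hk⟩ := hPF.reach w hw
    rw [Function.iterate_fixed hfw] at hk
    exact hℓr hk
  have := depth_succ (hPF.reach w hw) hwr
  rw [hfw] at this
  have hle := hmax w (Finset.mem_erase.2 ⟨hwr, hw⟩)
  omega

lemma isPF_erase {s : Finset (Fin n)} {r : Fin n} {f : Fin n → Fin n} {ℓ : Fin n}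
    (hPF : IsPF s r f) (hℓs : ℓ ∈ s) (hℓim : ℓ ∉ s.image f) (hℓr : ℓ ≠ r) :
    IsPF (s.erase ℓ) r (Function.update f ℓ ℓ) := by
  have hmaps : ∀ v ∈ s.erase ℓ, f v ∈ s.erase ℓ := by
    intro v hv
    obtain ⟨hvℓ, hvs⟩ := Finset.mem_erase.1 hv
    refine Finset.mem_erase.2 ⟨fun h => hℓim (Finset.mem_image.2 ⟨v, hvs, h⟩), hPF.maps v hvs⟩
  have hag : ∀ v ∈ s.erase ℓ, Function.update f ℓ ℓ v = f v := fun v hv =>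
    Function.update_of_ne (Finset.mem_erase.1 hv).1 _ _
  refine ⟨?_, ?_, ?_, ?_⟩
  · intro v hv
    rcases eq_or_ne v ℓ with rfl | hvℓ
    · simp
    · rw [Function.update_of_ne hvℓ]
      exact hPF.fix_out v (fun hs => hv (Finset.mem_erase.2 ⟨hvℓ, hs⟩))
  · rw [Function.update_of_ne (Ne.symm hℓr)]; exact hPF.root_fix
  · intro v hv; rw [hag v hv]; exact hmaps v hv
  · intro v hv
    obtain ⟨k, hk⟩ := hPF.reach v (Finset.mem_of_mem_erase hv)
    exact ⟨k, by rw [iterate_agree hmaps hag k v hv]; exact hk⟩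

/-- value `r` is in the image of `s.erase r` when `s` has ≥ 2 elements. -/
lemma root_mem_image {s : Finset (Fin n)} {r : Fin n} {f : Fin n → Fin n}
    (hPF : IsPF s r f) (hr : r ∈ s) (h2 : 2 ≤ s.card) : r ∈ (s.erase r).image f := by
  have hne : (s.erase r).Nonempty := by
    rw [← Finset.card_pos, Finset.card_erase_of_mem hr]; omega
  obtain ⟨v, hv⟩ := hne
  have hvr : v ≠ r := (Finset.mem_erase.1 hv).1
  have hvs := Finset.mem_of_mem_erase hv
  have hre := hPF.reach v hvs
  have hkpos : Nat.find hre ≠ 0 := by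
    intro h0
    have := Nat.find_spec hre
    rw [h0] at this
    exact hvr this
  set k := Nat.find hre with hk
  have hks : f^[k] v = r := Nat.find_spec hre
  set w := f^[k-1] v with hw
  have hws : w ∈ s := iterate_mem hPF.maps _ v hvs
  have hfw : f w = r := by
    have h5 : f^[(k-1)+1] v = r := by
      rw [Nat.sub_add_cancel (Nat.one_le_iff_ne_zero.2 hkpos)]; exact hks
    rw [Function.iterate_succ_apply'] at h5
    exact h5
  have hwr : w ≠ r := by
    intro h
    have := Nat.find_min hre (m := k - 1) (by omega)
    rw [← hw] at this; exact this h
  exact Finset.mem_image.2 ⟨w, Finset.mem_erase.2 ⟨hwr, hws⟩, hfw⟩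

lemma image_erase_root {s : Finset (Fin n)} {r : Fin n} {f : Fin n → Fin n}
    (hPF : IsPF s r f) (hr : r ∈ s) (h2 : 2 ≤ s.card) :
    (s.erase r).image f = s.image f := by
  apply Finset.Subset.antisymm (Finset.image_subset_image (Finset.erase_subset _ _))
  intro x hx
  obtain ⟨v, hv, hfv⟩ := Finset.mem_image.1 hx
  rcases eq_or_ne v r with rfl | hvr
  · rw [hPF.root_fix] at hfv
    exact hfv ▸ root_mem_image hPF hr h2
  · exact Finset.mem_image.2 ⟨v, Finset.mem_erase.2 ⟨hvr, hv⟩, hfv⟩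

noncomputable def encode (r : Fin n) (s : Finset (Fin n)) (f : Fin n → Fin n) : List (Fin n) :=
  if h : (s \ s.image f).Nonempty then
    f ((s \ s.image f).max' h) ::
      encode r (s.erase ((s \ s.image f).max' h))
        (Function.update f ((s \ s.image f).max' h) ((s \ s.image f).max' h))
  else []
termination_by s.card
decreasing_by
  exact Finset.card_erase_lt_of_mem (Finset.mem_sdiff.1 ((s \ s.image f).max'_mem h)).1

noncomputable def decode (r : Fin n) : List (Fin n) → Finset (Fin n) → (Fin n → Fin n)
  | [], _ => id
  | p :: c, s =>
    if h : (s \ (p :: c).toFinset).Nonempty then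
      Function.update (decode r c (s.erase ((s \ (p :: c).toFinset).max' h)))
        ((s \ (p :: c).toFinset).max' h) p
    else id

end CayleyAux

namespace CayleyAux
variable {n : ℕ}

theorem encode_spec {r : Fin n} : ∀ (s : Finset (Fin n)) (f : Fin n → Fin n),
    r ∈ s → IsPF s r f →
    ((encode r s f).length + 1 = s.card) ∧
    ((encode r s f).toFinset = (s.erase r).image f) ∧
    ((encode r s f) ≠ [] → (encode r s f).getLast? = some r) ∧
    (decode r (encode r s f) s = f) := by
  intro s
  induction s using Finset.strongInduction with
  | _ s IH =>
    intro f hr hPF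
    by_cases h : (s \ s.image f).Nonempty
    case neg =>
      -- s = {r}
      have h1 : s.card ≤ 1 := by
        by_contra hc
        exact h (exists_leaf hPF hr (by omega))
      have hcard : s = {r} := by
        have hc1 : s.card = 1 := le_antisymm h1 (Finset.card_pos.2 ⟨r, hr⟩)
        obtain ⟨a, ha⟩ := Finset.card_eq_one.1 hc1
        subst ha
        rw [Finset.mem_singleton.1 hr]
      have henc : encode r s f = [] := by rw [encode, dif_neg h]
      refine ⟨by rw [henc, hcard]; simp, by rw [henc, hcard]; simp, by simp [henc], ?_⟩
      rw [henc]
      show id = f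
      funext v
      rcases eq_or_ne v r with rfl | hvr
      · exact hPF.root_fix.symm
      · exact (hPF.fix_out v (by simp [hcard, hvr])).symm
    case pos =>
      obtain ⟨ℓ, hℓdef⟩ : ∃ ℓ, (s \ s.image f).max' h = ℓ := ⟨_, rfl⟩
      have hℓmem := (s \ s.image f).max'_mem h
      rw [hℓdef, Finset.mem_sdiff] at hℓmem
      obtain ⟨hℓs, hℓim⟩ := hℓmem
      have hℓr : ℓ ≠ r := by
        intro hc
        exact hℓim (Finset.mem_image.2 ⟨r, hr, by rw [hPF.root_fix]; exact hc.symm⟩)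
      have h2 : 2 ≤ s.card := Finset.one_lt_card.2 ⟨ℓ, hℓs, r, hr, hℓr⟩
      have hrs' : r ∈ s.erase ℓ := Finset.mem_erase.2 ⟨Ne.symm hℓr, hr⟩
      have hPF' := isPF_erase hPF hℓs hℓim hℓr
      have IH' := IH (s.erase ℓ) (Finset.erase_ssubset hℓs) _ hrs' hPF'
      obtain ⟨ihlen, ihset, ihlast, ihdec⟩ := IH'
      have henc : encode r s f = f ℓ :: encode r (s.erase ℓ) (Function.update f ℓ ℓ) := by
        rw [encode, dif_pos h, hℓdef]
      have hfℓs : f ℓ ∈ s := hPF.maps ℓ hℓs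
      have hfℓℓ : f ℓ ≠ ℓ := by
        intro hc
        exact hℓim (Finset.mem_image.2 ⟨ℓ, hℓs, hc⟩)
      -- (b)
      have hset : (encode r s f).toFinset = (s.erase r).image f := by
        rw [henc]
        simp only [List.toFinset_cons, ihset]
        have hcong : ((s.erase ℓ).erase r).image (Function.update f ℓ ℓ)
            = ((s.erase ℓ).erase r).image f := by
          apply Finset.image_congr
          intro x hx
          exact Function.update_of_ne (Finset.mem_erase.1 (Finset.mem_of_mem_erase hx)).1 _ _
        rw [hcong]
        have hrew : s.erase r = insert ℓ (((s.erase ℓ)).erase r) := by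
          rw [Finset.erase_right_comm]
          rw [Finset.insert_erase (Finset.mem_erase.2 ⟨hℓr, hℓs⟩)]
        rw [hrew, Finset.image_insert]
      refine ⟨?_, hset, ?_, ?_⟩
      · rw [henc]
        simp only [List.length_cons]
        rw [Finset.card_erase_of_mem hℓs] at ihlen
        omega
      · -- last
        rw [henc]
        intro _
        rcases eq_or_ne (encode r (s.erase ℓ) (Function.update f ℓ ℓ)) [] with he | he
        · rw [he]
          simp only [List.getLast?_singleton, Option.some.injEq]
          -- s.erase ℓ = {r}
          rw [he] at ihlen
          simp only [List.length_nil, zero_add] at ihlen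
          have h5 : s.erase ℓ = {r} := by
            obtain ⟨a, ha⟩ := Finset.card_eq_one.1 ihlen.symm
            rw [ha] at hrs' ⊢
            rw [Finset.mem_singleton.1 hrs']
          have h6 : f ℓ ∈ ({r} : Finset (Fin n)) := by
            rw [← h5]; exact Finset.mem_erase.2 ⟨hfℓℓ, hfℓs⟩
          simpa using h6
        · obtain ⟨b, l', hbl⟩ := List.exists_cons_of_ne_nil he
          rw [hbl, List.getLast?_cons_cons]
          rw [← hbl]
          exact ihlast he
      · -- decode
        rw [henc]
        have himfull : (f ℓ :: encode r (s.erase ℓ) (Function.update f ℓ ℓ)).toFinset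
            = s.image f := by
          rw [← henc, hset, image_erase_root hPF hr h2]
        rw [decode]
        rw [himfull]
        rw [dif_pos h, hℓdef, ihdec]
        rw [Function.update_idem, Function.update_eq_self]

theorem decode_spec {r : Fin n} : ∀ (c : List (Fin n)) (s : Finset (Fin n)),
    r ∈ s → c.length + 1 = s.card → (∀ x ∈ c, x ∈ s) → (c ≠ [] → c.getLast? = some r) →
    IsPF s r (decode r c s) ∧ encode r s (decode r c s) = c := by
  intro c
  induction c with
  | nil =>
    intro s hr hlen _ _
    simp only [List.length_nil, zero_add] at hlen
    have hs : s = {r} := by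
      obtain ⟨a, ha⟩ := Finset.card_eq_one.1 hlen.symm
      rw [ha] at hr ⊢
      rw [Finset.mem_singleton.1 hr]
    subst hs
    have hid : decode r ([] : List (Fin n)) {r} = id := by rw [decode]
    rw [hid]
    have hPF : IsPF ({r} : Finset (Fin n)) r id := by
      refine ⟨fun v _ => rfl, rfl, by simp, ?_⟩
      intro v hv
      rw [Finset.mem_singleton.1 hv]
      exact ⟨0, rfl⟩
    refine ⟨hPF, ?_⟩
    rw [encode, dif_neg]
    simp
  | cons p c ihc =>
    intro s hr hlen hmem hlast
    simp only [List.length_cons] at hlen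
    -- the sdiff is nonempty
    have hXne : (s \ (p :: c).toFinset).Nonempty := by
      rw [← Finset.card_pos]
      have h1 : (p :: c).toFinset.card ≤ c.length + 1 := by
        simpa using (p :: c).toFinset_card_le
      have h2 := Finset.le_card_sdiff (p :: c).toFinset s
      omega
    obtain ⟨ℓ, hℓdef⟩ : ∃ ℓ, (s \ (p :: c).toFinset).max' hXne = ℓ := ⟨_, rfl⟩
    have hℓmem := (s \ (p :: c).toFinset).max'_mem hXne
    rw [hℓdef, Finset.mem_sdiff] at hℓmem
    obtain ⟨hℓs, hℓX⟩ := hℓmem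
    have hrX : r ∈ (p :: c).toFinset := by
      have := hlast (by simp)
      obtain ⟨hne, hget⟩ := List.mem_getLast?_eq_getLast this
      rw [List.mem_toFinset, hget]
      exact List.getLast_mem hne
    have hℓr : ℓ ≠ r := fun hc => hℓX (hc ▸ hrX)
    have hps : p ∈ s := hmem p (by simp)
    have hpℓ : p ≠ ℓ := fun hc => hℓX (hc ▸ (by simp : p ∈ (p :: c).toFinset))
    have hrs' : r ∈ s.erase ℓ := Finset.mem_erase.2 ⟨Ne.symm hℓr, hr⟩
    -- validity of c for s.erase ℓ
    have hlen' : c.length + 1 = (s.erase ℓ).card := by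
      rw [Finset.card_erase_of_mem hℓs]; omega
    have hmem' : ∀ x ∈ c, x ∈ s.erase ℓ := by
      intro x hx
      refine Finset.mem_erase.2 ⟨fun hc => hℓX (hc ▸ (by simp [hx] : x ∈ (p :: c).toFinset)), hmem x (by simp [hx])⟩
    have hlast' : c ≠ [] → c.getLast? = some r := by
      intro hne
      obtain ⟨b, l', hbl⟩ := List.exists_cons_of_ne_nil hne
      have := hlast (by simp)
      rw [hbl, List.getLast?_cons_cons] at this
      rw [hbl]
      exact this
    obtain ⟨ihPF, ihenc⟩ := ihc (s.erase ℓ) hrs' hlen' hmem' hlast'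
    -- unfold decode
    have hdec : decode r (p :: c) s = Function.update (decode r c (s.erase ℓ)) ℓ p := by
      rw [decode, dif_pos hXne, hℓdef]
    set f' := decode r c (s.erase ℓ) with hf'
    have hf'ℓ : f' ℓ = ℓ := ihPF.fix_out ℓ (Finset.notMem_erase _ _)
    have hagree : ∀ v ∈ s.erase ℓ, Function.update f' ℓ p v = f' v := fun v hv =>
      Function.update_of_ne (Finset.mem_erase.1 hv).1 _ _
    have hpe : p ∈ s.erase ℓ := Finset.mem_erase.2 ⟨hpℓ, hps⟩
    have hPF : IsPF s r (decode r (p :: c) s) := by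
      rw [hdec]
      refine ⟨?_, ?_, ?_, ?_⟩
      · intro v hv
        rw [Function.update_of_ne (fun hc => hv (by rw [hc]; exact hℓs)) _ _]
        exact ihPF.fix_out v (fun hc => hv (Finset.mem_of_mem_erase hc))
      · rw [Function.update_of_ne (Ne.symm hℓr) _ _]
        exact ihPF.root_fix
      · intro v hv
        rcases eq_or_ne v ℓ with rfl | hvℓ
        · simpa using hps
        · rw [Function.update_of_ne hvℓ _ _]
          exact Finset.mem_of_mem_erase (ihPF.maps v (Finset.mem_erase.2 ⟨hvℓ, hv⟩))
      · intro v hv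
        rcases eq_or_ne v ℓ with rfl | hvℓ
        · obtain ⟨k, hk⟩ := ihPF.reach p hpe
          refine ⟨k + 1, ?_⟩
          rw [Function.iterate_succ_apply, Function.update_self]
          rw [iterate_agree ihPF.maps hagree k p hpe]
          exact hk
        · obtain ⟨k, hk⟩ := ihPF.reach v (Finset.mem_erase.2 ⟨hvℓ, hv⟩)
          refine ⟨k, ?_⟩
          rw [iterate_agree ihPF.maps hagree k v (Finset.mem_erase.2 ⟨hvℓ, hv⟩)]
          exact hk
    refine ⟨hPF, ?_⟩
    rw [hdec] at hPF ⊢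
    -- show the image of the new function is the toFinset of the code
    have himg : s.image (Function.update f' ℓ p) = (p :: c).toFinset := by
      have h1 : s.image (Function.update f' ℓ p) = insert p ((s.erase ℓ).image f') := by
        conv_lhs => rw [← Finset.insert_erase hℓs]
        rw [Finset.image_insert, Function.update_self]
        rw [Finset.image_congr (fun x hx => hagree x hx)]
      rw [h1]
      simp only [List.toFinset_cons]
      have hspec := encode_spec (s.erase ℓ) f' hrs' ihPF
      rw [ihenc] at hspec
      rcases eq_or_ne c [] with rfl | hcne
      · -- s.erase ℓ = {r}, p = r
        simp only [List.length_nil, zero_add] at hlen'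
        have h5 : s.erase ℓ = {r} := by
          obtain ⟨a, ha⟩ := Finset.card_eq_one.1 hlen'.symm
          rw [ha] at hrs' ⊢
          rw [Finset.mem_singleton.1 hrs']
        have hpr : p = r := by
          have := hlast (by simp)
          simpa using this
        rw [h5]
        have hfr : f' r = r := ihPF.root_fix
        simp [hfr, hpr]
      · congr 1
        have h2 : 2 ≤ (s.erase ℓ).card := by
          have : c.length ≠ 0 := fun hc => hcne (List.length_eq_zero_iff.1 hc)
          omega
        rw [← image_erase_root ihPF hrs' h2]
        exact hspec.2.1.symm
    rw [encode]
    have hXim : s \ s.image (Function.update f' ℓ p) = s \ (p :: c).toFinset := by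
      rw [himg]
    rw [himg, dif_pos hXne, hℓdef, Function.update_self, Function.update_idem]
    have : Function.update f' ℓ ℓ = f' := Function.update_eq_self_iff.2 hf'ℓ.symm
    rw [this, ihenc]


noncomputable def pfCodeEquiv (r : Fin n) :
    {f : Fin n → Fin n // IsPF Finset.univ r f} ≃
      {c : List (Fin n) // c.length + 1 = n ∧ (c ≠ [] → c.getLast? = some r)} where
  toFun f := ⟨encode r Finset.univ f.1, by
    have hs := encode_spec Finset.univ f.1 (Finset.mem_univ r) f.2
    refine ⟨by simpa using hs.1, hs.2.2.1⟩⟩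
  invFun c := ⟨decode r c.1 Finset.univ, by
    have hs := decode_spec c.1 Finset.univ (Finset.mem_univ r)
      (by simpa using c.2.1) (fun x _ => Finset.mem_univ x) c.2.2
    exact hs.1⟩
  left_inv f := by
    apply Subtype.ext
    exact (encode_spec Finset.univ f.1 (Finset.mem_univ r) f.2).2.2.2
  right_inv c := by
    apply Subtype.ext
    exact (decode_spec c.1 Finset.univ (Finset.mem_univ r)
      (by simpa using c.2.1) (fun x _ => Finset.mem_univ x) c.2.2).2

lemma getD_eq_getElem_of_lt (l : List (Fin n)) (d : Fin n) {i : ℕ} (h : i < l.length) :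
    l.getD i d = l[i] := by
  rw [List.getD_eq_getElem?_getD, List.getElem?_eq_getElem h]
  rfl

noncomputable def codeFunEquiv (r : Fin n) (hn : 2 ≤ n) :
    {c : List (Fin n) // c.length + 1 = n ∧ (c ≠ [] → c.getLast? = some r)} ≃
      (Fin (n - 2) → Fin n) where
  toFun c i := c.1.getD i r
  invFun g := ⟨List.ofFn g ++ [r], by
    constructor
    · simp
      omega
    · intro _
      simp⟩
  left_inv c := by
    apply Subtype.ext
    obtain ⟨hlen, hlast⟩ := c.2
    have hne : c.1 ≠ [] := by
      intro hc
      rw [hc] at hlen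
      simp at hlen
      omega
    have hlast' : c.1.getLast hne = r := by
      have := hlast hne
      rw [List.getLast?_eq_getLast_of_ne_nil hne] at this
      exact Option.some_injective _ this
    apply List.ext_getElem
    · simp
      omega
    · intro i h1 h2
      by_cases hi : i < n - 2
      · rw [List.getElem_append_left (by simpa using hi)]
        rw [List.getElem_ofFn]
        show c.1.getD (↑(⟨i, hi⟩ : Fin (n - 2))) r = c.1[i]
        exact getD_eq_getElem_of_lt _ _ h2
      · have hieq : i = n - 2 := by
          simp only [List.length_append, List.length_ofFn, List.length_singleton] at h1
          omega
        rw [List.getElem_append_right (by simp [hieq])]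
        rw [List.getElem_singleton]
        have : c.1[i] = c.1.getLast hne := by
          rw [List.getLast_eq_getElem]
          congr 1
          omega
        rw [this, hlast']
  right_inv g := by
    funext i
    show (List.ofFn g ++ [r]).getD ↑i r = g i
    have hi : (i : ℕ) < (List.ofFn g).length := by simp
    rw [getD_eq_getElem_of_lt _ _ (by simp [hi])]
    rw [List.getElem_append_left hi]
    rw [List.getElem_ofFn]

theorem card_pf (r : Fin n) (hn : 1 ≤ n) :
    Nat.card {f : Fin n → Fin n // IsPF Finset.univ r f} = n ^ (n - 2) := by
  rw [Nat.card_congr (pfCodeEquiv r)]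
  rcases eq_or_lt_of_le hn with h1 | h2
  · -- n = 1
    have : n - 2 = 0 := by omega
    rw [this, pow_zero]
    rw [Nat.card_eq_one_iff_unique]
    constructor
    · constructor
      rintro ⟨c, hc⟩ ⟨d, hd⟩
      have : c = [] := List.length_eq_zero_iff.1 (by omega)
      have : d = [] := List.length_eq_zero_iff.1 (by omega)
      subst ‹c = []›; subst ‹d = []›
      rfl
    · exact ⟨⟨[], by constructor <;> simp <;> omega⟩⟩
  · rw [Nat.card_congr (codeFunEquiv r h2)]
    rw [Nat.card_eq_fintype_card, Fintype.card_fun]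
    simp


open SimpleGraph

def graphOf (r : Fin n) (f : Fin n → Fin n) : SimpleGraph (Fin n) :=
  SimpleGraph.fromEdgeSet {e | ∃ v, v ≠ r ∧ e = s(v, f v)}

lemma graphOf_adj {r : Fin n} {f : Fin n → Fin n} {a b : Fin n} :
    (graphOf r f).Adj a b ↔ (∃ v, v ≠ r ∧ s(a, b) = s(v, f v)) ∧ a ≠ b := by
  simp [graphOf, SimpleGraph.fromEdgeSet_adj, Set.mem_setOf_eq]

variable {r : Fin n} {f : Fin n → Fin n}

lemma fv_ne (hPF : IsPF Finset.univ r f) {v : Fin n} (hv : v ≠ r) : f v ≠ v := by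
  intro hc
  obtain ⟨k, hk⟩ := hPF.reach v (Finset.mem_univ v)
  rw [Function.iterate_fixed hc] at hk
  exact hv hk

lemma adj_parent (hPF : IsPF Finset.univ r f) {v : Fin n} (hv : v ≠ r) :
    (graphOf r f).Adj v (f v) :=
  graphOf_adj.2 ⟨⟨v, hv, rfl⟩, (fv_ne hPF hv).symm⟩

lemma reachable_root (hPF : IsPF Finset.univ r f) :
    ∀ (k : ℕ) (v : Fin n), f^[k] v = r → (graphOf r f).Reachable v r := by
  intro k
  induction k with
  | zero => intro v hv; rw [show f^[0] v = v from rfl] at hv; subst hv; rfl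
  | succ k ih =>
    intro v hv
    rcases eq_or_ne v r with rfl | hvr
    · rfl
    · rw [Function.iterate_succ_apply] at hv
      exact ((adj_parent hPF hvr).reachable).trans (ih (f v) hv)

lemma connected_graphOf (hPF : IsPF Finset.univ r f) : (graphOf r f).Connected := by
  have : Nonempty (Fin n) := ⟨r⟩
  refine ⟨fun u v => ?_⟩
  obtain ⟨k, hk⟩ := hPF.reach u (Finset.mem_univ u)
  obtain ⟨l, hl⟩ := hPF.reach v (Finset.mem_univ v)
  exact (reachable_root hPF k u hk).trans (reachable_root hPF l v hl).symm

lemma adj_cases (hadj : (graphOf r f).Adj a b) :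
    (b = f a ∧ a ≠ r) ∨ (a = f b ∧ b ≠ r) := by
  obtain ⟨⟨v, hvr, he⟩, hne⟩ := graphOf_adj.1 hadj
  rw [Sym2.eq_iff] at he
  rcases he with ⟨rfl, rfl⟩ | ⟨rfl, rfl⟩
  · exact Or.inl ⟨rfl, hvr⟩
  · exact Or.inr ⟨rfl, hvr⟩

lemma exists_last_edge {V : Type*} {G : SimpleGraph V} :
    ∀ {a b : V} (q : G.Walk a b), a ≠ b → ∃ z, G.Adj z b ∧ s(z, b) ∈ q.edges := by
  intro a b q
  induction q with
  | nil => intro h; exact absurd rfl h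
  | @cons u v w hadj q ih =>
    intro _
    rcases eq_or_ne v w with rfl | hvw
    · exact ⟨u, hadj, by simp⟩
    · obtain ⟨z, hz, hze⟩ := ih hvw
      exact ⟨z, hz, by simp [hze]⟩

lemma acyclic_graphOf (hPF : IsPF Finset.univ r f) : (graphOf r f).IsAcyclic := by
  intro u c hc
  have hre : ∀ v : Fin n, ∃ k, f^[k] v = r := fun v => hPF.reach v (Finset.mem_univ v)
  obtain ⟨x, hx, hmax⟩ := Finset.exists_max_image c.support.toFinset (depth r f)
    ⟨u, List.mem_toFinset.2 c.start_mem_support⟩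
  have hxs : x ∈ c.support := List.mem_toFinset.1 hx
  have hc' := hc.rotate hxs
  set c' := c.rotate x hxs with hc'def
  have hmax' : ∀ v ∈ c'.support, depth r f v ≤ depth r f x := by
    intro v hv
    rcases (SimpleGraph.Walk.mem_support_iff _).1 hv with rfl | hv'
    · exact le_refl _
    · have : v ∈ c.support.tail := (SimpleGraph.Walk.support_rotate c x hxs).mem_iff.1 hv'
      exact hmax v (List.mem_toFinset.2 (List.tail_subset _ this))
  -- dissect the cycle
  cases hcc : c' with
  | nil => rw [hcc] at hc'; exact SimpleGraph.Walk.IsCycle.not_of_nil hc'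
  | cons hadj q =>
    rw [hcc] at hc' hmax'
    obtain ⟨hq, hxe⟩ := (SimpleGraph.Walk.cons_isCycle_iff _ _).1 hc'
    -- hadj : Adj x y, q : Walk y x
    rename_i y
    have hyx : y ≠ x := hadj.ne'
    obtain ⟨z, hzadj, hze⟩ := exists_last_edge q hyx
    have hy : (graphOf r f).Adj x y := hadj
    have hymem : y ∈ (SimpleGraph.Walk.cons hadj q).support := by
      rw [SimpleGraph.Walk.support_cons]
      exact List.mem_cons_of_mem _ q.start_mem_support
    have hzmem : z ∈ (SimpleGraph.Walk.cons hadj q).support := by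
      rw [SimpleGraph.Walk.support_cons]
      exact List.mem_cons_of_mem _ (SimpleGraph.Walk.fst_mem_support_of_mem_edges q hze)
    have hyfx : y = f x := by
      rcases adj_cases hy with ⟨h1, _⟩ | ⟨h1, hyr⟩
      · exact h1
      · exfalso
        have := depth_succ (hre y) hyr
        rw [← h1] at this
        have := hmax' y hymem
        omega
    have hzfx : z = f x := by
      rcases adj_cases hzadj with ⟨h1, hzr⟩ | ⟨h1, _⟩
      · exfalso
        have := depth_succ (hre z) hzr
        rw [← h1] at this
        have := hmax' z hzmem
        omega
      · exact h1
    apply hxe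
    have : s(z, x) = s(x, y) := by
      rw [hyfx, hzfx, Sym2.eq_swap]
    rwa [this] at hze

lemma isTree_graphOf (hPF : IsPF Finset.univ r f) : (graphOf r f).IsTree :=
  ⟨connected_graphOf hPF, acyclic_graphOf hPF⟩


noncomputable def thePath (H : SimpleGraph (Fin n)) (hH : H.IsTree) (v r : Fin n) :
    H.Walk v r :=
  (hH.existsUnique_path v r).choose

lemma thePath_isPath {H : SimpleGraph (Fin n)} (hH : H.IsTree) (v r : Fin n) :
    (thePath H hH v r).IsPath :=
  (hH.existsUnique_path v r).choose_spec.1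

lemma thePath_unique {H : SimpleGraph (Fin n)} (hH : H.IsTree) {v r : Fin n}
    {q : H.Walk v r} (hq : q.IsPath) : q = thePath H hH v r :=
  (hH.existsUnique_path v r).choose_spec.2 q hq

lemma thePath_self {H : SimpleGraph (Fin n)} (hH : H.IsTree) (r : Fin n) :
    thePath H hH r r = SimpleGraph.Walk.nil :=
  (SimpleGraph.Walk.isPath_iff_eq_nil.1 (thePath_isPath hH r r)).symm ▸
    (thePath_unique hH (SimpleGraph.Walk.IsPath.nil)).symm

noncomputable def treeParent (H : SimpleGraph (Fin n)) (hH : H.IsTree) (r v : Fin n) :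
    Fin n :=
  if v = r then v else (thePath H hH v r).getVert 1

lemma treeParent_root {H : SimpleGraph (Fin n)} (hH : H.IsTree) (r : Fin n) :
    treeParent H hH r r = r := if_pos rfl

lemma treeParent_def {H : SimpleGraph (Fin n)} (hH : H.IsTree) {r v : Fin n} (hv : v ≠ r) :
    treeParent H hH r v = (thePath H hH v r).getVert 1 := if_neg hv

lemma adj_treeParent {H : SimpleGraph (Fin n)} (hH : H.IsTree) {r v : Fin n} (hv : v ≠ r) :
    H.Adj v (treeParent H hH r v) := by
  rw [treeParent_def hH hv]
  have hnn : ¬(thePath H hH v r).Nil := SimpleGraph.Walk.not_nil_of_ne hv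
  have hlen : 0 < (thePath H hH v r).length := by
    rw [SimpleGraph.Walk.nil_iff_length_eq] at hnn
    omega
  have := (thePath H hH v r).adj_getVert_succ hlen
  rwa [SimpleGraph.Walk.getVert_zero] at this

lemma thePath_tail {H : SimpleGraph (Fin n)} (hH : H.IsTree) {r v : Fin n} (hv : v ≠ r) :
    (thePath H hH v r).tail = thePath H hH ((thePath H hH v r).getVert 1) r := by
  apply thePath_unique
  exact (thePath_isPath hH v r).tail

lemma length_thePath_parent {H : SimpleGraph (Fin n)} (hH : H.IsTree) {r v : Fin n}
    (hv : v ≠ r) :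
    (thePath H hH ((thePath H hH v r).getVert 1) r).length + 1
      = (thePath H hH v r).length := by
  rw [← thePath_tail hH hv]
  exact SimpleGraph.Walk.length_tail_add_one (SimpleGraph.Walk.not_nil_of_ne hv)

lemma treeParent_reach {H : SimpleGraph (Fin n)} (hH : H.IsTree) (r : Fin n) :
    ∀ (m : ℕ) (v : Fin n), (thePath H hH v r).length ≤ m →
      ∃ k, (treeParent H hH r)^[k] v = r := by
  intro m
  induction m with
  | zero =>
    intro v hv
    have : v = r := SimpleGraph.Walk.eq_of_length_eq_zero (Nat.le_zero.1 hv)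
    exact ⟨0, this⟩
  | succ m ih =>
    intro v hv
    rcases eq_or_ne v r with rfl | hvr
    · exact ⟨0, rfl⟩
    · have hlen := length_thePath_parent hH hvr
      obtain ⟨k, hk⟩ := ih ((thePath H hH v r).getVert 1) (by omega)
      refine ⟨k + 1, ?_⟩
      rw [Function.iterate_succ_apply, treeParent_def hH hvr]
      exact hk

lemma isPF_treeParent (H : SimpleGraph (Fin n)) (hH : H.IsTree) (r : Fin n) :
    IsPF Finset.univ r (treeParent H hH r) := by
  refine ⟨fun v hv => absurd (Finset.mem_univ v) hv, treeParent_root hH r,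
    fun v _ => Finset.mem_univ _, fun v _ => ?_⟩
  exact treeParent_reach hH r (thePath H hH v r).length v le_rfl


lemma depth_eq_zero_iff (hre : ∃ k, f^[k] v = r) : depth r f v = 0 ↔ v = r := by
  rw [depth, dif_pos hre, Nat.find_eq_zero]
  exact Iff.rfl

lemma exists_follow_walk (hPF : IsPF Finset.univ r f) :
    ∀ (d : ℕ) (v : Fin n), depth r f v ≤ d →
      ∃ p : (graphOf r f).Walk v r, p.IsPath ∧ (v ≠ r → p.getVert 1 = f v) ∧
        ∀ w ∈ p.support, depth r f w ≤ depth r f v := by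
  have hre : ∀ v : Fin n, ∃ k, f^[k] v = r := fun v => hPF.reach v (Finset.mem_univ v)
  intro d
  induction d with
  | zero =>
    intro v hv
    have : v = r := (depth_eq_zero_iff (hre v)).1 (Nat.le_zero.1 hv)
    subst this
    exact ⟨SimpleGraph.Walk.nil, SimpleGraph.Walk.IsPath.nil, fun h => absurd rfl h,
      by simp⟩
  | succ d ih =>
    intro v hv
    rcases eq_or_ne v r with rfl | hvr
    · exact ⟨SimpleGraph.Walk.nil, SimpleGraph.Walk.IsPath.nil, fun h => absurd rfl h,
        by simp⟩
    · have hd := depth_succ (hre v) hvr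
      obtain ⟨q, hq, _, hqsup⟩ := ih (f v) (by omega)
      have hvq : v ∉ q.support := by
        intro hmem
        have := hqsup v hmem
        omega
      refine ⟨SimpleGraph.Walk.cons (adj_parent hPF hvr) q,
        (SimpleGraph.Walk.cons_isPath_iff _ _).2 ⟨hq, hvq⟩, fun _ => ?_, ?_⟩
      · rw [SimpleGraph.Walk.getVert_cons_succ, SimpleGraph.Walk.getVert_zero]
      · intro w hw
        rw [SimpleGraph.Walk.support_cons] at hw
        rcases List.mem_cons.1 hw with rfl | hw'
        · exact le_rfl
        · have := hqsup w hw'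
          omega

lemma treeParent_graphOf (hPF : IsPF Finset.univ r f) (hT : (graphOf r f).IsTree) :
    treeParent (graphOf r f) hT r = f := by
  funext v
  rcases eq_or_ne v r with rfl | hvr
  · rw [treeParent_root, hPF.root_fix]
  · rw [treeParent_def hT hvr]
    obtain ⟨p, hp, hp1, _⟩ := exists_follow_walk hPF (depth r f v) v le_rfl
    rw [← thePath_unique hT hp]
    exact hp1 hvr

lemma key_adj {H : SimpleGraph (Fin n)} (hH : H.IsTree) {r a b : Fin n} (hab : H.Adj a b)
    (hle : (thePath H hH b r).length ≤ (thePath H hH a r).length) :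
    treeParent H hH r a = b ∧ a ≠ r := by
  have hba : b ∉ (thePath H hH b r).support → True := fun _ => trivial
  -- a is not on thePath b r
  have hnotmem : a ∉ (thePath H hH b r).support := by
    intro hmem
    have hdrop : ((thePath H hH b r).dropUntil a hmem).IsPath :=
      (thePath_isPath hH b r).dropUntil hmem
    have hspec := (thePath H hH b r).take_spec hmem
    have hlen := congr_arg SimpleGraph.Walk.length hspec
    rw [SimpleGraph.Walk.length_append] at hlen
    have hdropeq := thePath_unique hH hdrop
    have htake : 0 < ((thePath H hH b r).takeUntil a hmem).length := by
      rcases Nat.eq_zero_or_pos ((thePath H hH b r).takeUntil a hmem).length with h0 | h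
      · exact absurd (SimpleGraph.Walk.eq_of_length_eq_zero h0) hab.ne'
      · exact h
    rw [hdropeq] at hlen
    omega
  have hpath : (SimpleGraph.Walk.cons hab (thePath H hH b r)).IsPath :=
    (SimpleGraph.Walk.cons_isPath_iff _ _).2 ⟨thePath_isPath hH b r, hnotmem⟩
  have heq := thePath_unique hH hpath
  have har : a ≠ r := by
    intro hc
    have hcopy : ((SimpleGraph.Walk.cons hab (thePath H hH b r)).copy hc rfl).IsPath :=
      (SimpleGraph.Walk.isPath_copy _ _ _).2 hpath
    have hnil := SimpleGraph.Walk.isPath_iff_eq_nil.1 hcopy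
    have hlen := congr_arg SimpleGraph.Walk.length hnil
    rw [SimpleGraph.Walk.length_copy] at hlen
    simp at hlen
  constructor
  · rw [treeParent_def hH har, ← heq]
    rw [SimpleGraph.Walk.getVert_cons_succ, SimpleGraph.Walk.getVert_zero]
  · exact har

lemma graphOf_treeParent {H : SimpleGraph (Fin n)} (hH : H.IsTree) (r : Fin n) :
    graphOf r (treeParent H hH r) = H := by
  apply le_antisymm
  · intro a b hab
    obtain ⟨⟨v, hvr, he⟩, hne⟩ := graphOf_adj.1 hab
    rw [Sym2.eq_iff] at he
    rcases he with ⟨rfl, rfl⟩ | ⟨rfl, rfl⟩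
    · exact adj_treeParent hH hvr
    · exact (adj_treeParent hH hvr).symm
  · intro a b hab
    rcases le_total (thePath H hH b r).length (thePath H hH a r).length with hle | hle
    · obtain ⟨h1, h2⟩ := key_adj hH hab hle
      exact graphOf_adj.2 ⟨⟨a, h2, by rw [h1]⟩, hab.ne⟩
    · obtain ⟨h1, h2⟩ := key_adj hH hab.symm hle
      exact graphOf_adj.2 ⟨⟨b, h2, by rw [h1, Sym2.eq_swap]⟩, hab.ne⟩

noncomputable def treePFEquiv (r : Fin n) :
    {H : SimpleGraph (Fin n) // H.IsTree} ≃ {f : Fin n → Fin n // IsPF Finset.univ r f} where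
  toFun H := ⟨treeParent H.1 H.2 r, isPF_treeParent H.1 H.2 r⟩
  invFun f := ⟨graphOf r f.1, isTree_graphOf f.2⟩
  left_inv H := Subtype.ext (graphOf_treeParent H.2 r)
  right_inv f := Subtype.ext (treeParent_graphOf f.2 (isTree_graphOf f.2))

theorem card_trees (r : Fin n) (hn : 1 ≤ n) :
    Nat.card {H : SimpleGraph (Fin n) // H.IsTree} = n ^ (n - 2) := by
  rw [Nat.card_congr (treePFEquiv r)]
  exact card_pf r hn

end CayleyAux


/-- Cayley's formula: the number of labeled trees on `n ≥ 1` vertices,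
i.e. the number of spanning trees of the complete graph `K_n`, is `n^(n−2)`. -/
theorem cayley_formula (n : ℕ) (hn : 1 ≤ n) :
    Nat.card {H : SimpleGraph (Fin n) // H.IsTree} = n ^ (n - 2) := by
  exact CayleyAux.card_trees ⟨0, hn⟩ hn
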